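/- Let k be a field, H a Hopf algebra over k, and R a unitary universal R-matrix on H (i.e. R·τ(R) = 1). Then for every l ∈ H*, S((id⊗l)(R)) = (l⊗id)(R); consequently the subspaces H_l and H_r coincide. -/

import Mathlib

open scoped TensorProduct

noncomputable section

variable (k H : Type*) [Field k] [Ring H] [HopfAlgebra k H]

/-- The comultiplication as an algebra map. -/
abbrev Δ : H →ₐ[k] H ⊗[k] H := Bialgebra.comulAlgHom k H

/-- The flip `x ⊗ y ↦ y ⊗ x` of the tensor square, as an algebra map. -/
abbrev τ : H ⊗[k] H →ₐ[k] H ⊗[k] H := (Algebra.TensorProduct.comm k H H).toAlgHom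

/-- `x ⊗ y ↦ x ⊗ y ⊗ 1`. -/
abbrev ι₁₂ : H ⊗[k] H →ₐ[k] H ⊗[k] (H ⊗[k] H) :=
  Algebra.TensorProduct.map (AlgHom.id k H) Algebra.TensorProduct.includeLeft

/-- `x ⊗ y ↦ x ⊗ 1 ⊗ y`. -/
abbrev ι₁₃ : H ⊗[k] H →ₐ[k] H ⊗[k] (H ⊗[k] H) :=
  Algebra.TensorProduct.map (AlgHom.id k H) Algebra.TensorProduct.includeRight

/-- `x ⊗ y ↦ 1 ⊗ x ⊗ y`. -/
abbrev ι₂₃ : H ⊗[k] H →ₐ[k] H ⊗[k] (H ⊗[k] H) :=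
  Algebra.TensorProduct.includeRight

/-- `id ⊗ Δ`. -/
abbrev idΔ : H ⊗[k] H →ₐ[k] H ⊗[k] (H ⊗[k] H) :=
  Algebra.TensorProduct.map (AlgHom.id k H) (Bialgebra.comulAlgHom k H)

/-- `Δ ⊗ id` (re-associated to land in `H ⊗ (H ⊗ H)`). -/
abbrev Δid : H ⊗[k] H →ₐ[k] H ⊗[k] (H ⊗[k] H) :=
  (Algebra.TensorProduct.assoc k k k H H H).toAlgHom.comp
    (Algebra.TensorProduct.map (Bialgebra.comulAlgHom k H) (AlgHom.id k H))

/-- `R` is a universal R-matrix (quasitriangular structure) on `H`. -/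
def IsUnivRMatrix (R : H ⊗[k] H) : Prop :=
  IsUnit R ∧
  (∀ h : H, R * τ k H (Δ k H h) = Δ k H h * R) ∧
  idΔ k H R = ι₁₃ k H R * ι₁₂ k H R ∧
  Δid k H R = ι₁₃ k H R * ι₂₃ k H R

/-- `ε ⊗ id : H ⊗ H → H`, `x ⊗ y ↦ ε(x)·y`. -/
abbrev εid : H ⊗[k] H →ₐ[k] H :=
  (Algebra.TensorProduct.lid k H).toAlgHom.comp
    (Algebra.TensorProduct.map (Bialgebra.counitAlgHom k H) (AlgHom.id k H))

/-- `id ⊗ ε : H ⊗ H → H`, `x ⊗ y ↦ ε(y)·x`. -/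
abbrev idε : H ⊗[k] H →ₐ[k] H :=
  ((Algebra.TensorProduct.rid k k H).toAlgHom.restrictScalars k).comp
    (Algebra.TensorProduct.map (AlgHom.id k H) (Bialgebra.counitAlgHom k H))

/-- `S ⊗ id : H ⊗ H → H ⊗ H`. -/
abbrev Sid : H ⊗[k] H →ₗ[k] H ⊗[k] H :=
  LinearMap.rTensor H (HopfAlgebra.antipode (R := k))

/-- `S ⊗ S : H ⊗ H → H ⊗ H`. -/
abbrev SS : H ⊗[k] H →ₗ[k] H ⊗[k] H :=
  TensorProduct.map (HopfAlgebra.antipode (R := k)) (HopfAlgebra.antipode (R := k))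

/-- The Markov element `u = μ((S ⊗ id)(τ(R)))` of a bivector `R`. -/
def markov (R : H ⊗[k] H) : H :=
  LinearMap.mul' k H (Sid k H ((TensorProduct.comm k H H) R))

/-- `(id ⊗ l)(R)` : applying a linear functional to the second tensor factor. -/
def evR (l : H →ₗ[k] k) : H ⊗[k] H →ₗ[k] H :=
  (TensorProduct.rid k H).toLinearMap ∘ₗ LinearMap.lTensor H l

/-- `(l ⊗ id)(R)` : applying a linear functional to the first tensor factor. -/
def evL (l : H →ₗ[k] k) : H ⊗[k] H →ₗ[k] H :=
  (TensorProduct.lid k H).toLinearMap ∘ₗ LinearMap.rTensor H l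

/-- The subspace `H_l = {(id ⊗ l)(R) : l ∈ H*}`. -/
def Hl (R : H ⊗[k] H) : Set H := Set.range fun l : H →ₗ[k] k => evR k H l R

/-- The subspace `H_r = {(l ⊗ id)(R) : l ∈ H*}`. -/
def Hr (R : H ⊗[k] H) : Set H := Set.range fun l : H →ₗ[k] k => evL k H l R

/-- `H` is cocommutative: `τ ∘ Δ = Δ`. -/
def IsCocomm : Prop :=
  ∀ x : H, (TensorProduct.comm k H H) (Coalgebra.comul (R := k) x) = Coalgebra.comul x

/-- The adjoint action `x ↦ x^h = Σ h₍₁₎ · x · S(h₍₂₎)` of `h`, as an endomorphism of `H`. -/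
def adEnd (h : H) : H →ₗ[k] H :=
  TensorProduct.lift
    (LinearMap.mk₂ k
      (fun a b => LinearMap.mulRight k (HopfAlgebra.antipode (R := k) b) ∘ₗ
        LinearMap.mulLeft k a)
      (fun a a' b => by ext x; simp [add_mul])
      (fun c a b => by ext x; simp [smul_mul_assoc])
      (fun a b b' => by ext x; simp [mul_add])
      (fun c a b => by ext x; simp [mul_smul_comm]))
    (Coalgebra.comul h)


section Aux

open HopfAlgebra Coalgebra

/-- `a ⊗ w ↦ (S a ⊗ 1) * w`. -/
def phiS : H ⊗[k] (H ⊗[k] H) →ₗ[k] H ⊗[k] H :=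
  LinearMap.mul' k (H ⊗[k] H) ∘ₗ
    LinearMap.rTensor (H ⊗[k] H)
      ((Algebra.TensorProduct.includeLeft : H →ₐ[k] H ⊗[k] H).toLinearMap ∘ₗ
        antipode (R := k))

lemma phiS_tmul (a : H) (w : H ⊗[k] H) :
    phiS k H (a ⊗ₜ w) = ((antipode (R := k) a : H) ⊗ₜ (1 : H)) * w := by
  simp [phiS, Algebra.TensorProduct.includeLeft_apply]

lemma phiS_mul_right (t : H ⊗[k] (H ⊗[k] H)) (r : H ⊗[k] H) :
    phiS k H (t * ι₂₃ k H r) = phiS k H t * r := by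
  induction t using TensorProduct.induction_on with
  | zero => simp
  | tmul a w =>
      rw [show ι₂₃ k H r = (1 : H) ⊗ₜ r from rfl, Algebra.TensorProduct.tmul_mul_tmul,
        mul_one, phiS_tmul, phiS_tmul, mul_assoc]
  | add x y hx hy => rw [add_mul, map_add, hx, hy, map_add, add_mul]

lemma phiS_iota13 (z : H ⊗[k] H) :
    phiS k H (ι₁₃ k H z) = Sid k H z := by
  induction z using TensorProduct.induction_on with
  | zero => simp
  | tmul a b =>
      rw [show ι₁₃ k H (a ⊗ₜ b) = a ⊗ₜ ((1 : H) ⊗ₜ b) from rfl, phiS_tmul,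
        Algebra.TensorProduct.tmul_mul_tmul, mul_one, one_mul, Sid,
        LinearMap.rTensor_tmul]
  | add x y hx hy => rw [map_add, map_add, hx, hy, map_add]

lemma phiS_assoc (c : H ⊗[k] H) (b : H) :
    phiS k H ((Algebra.TensorProduct.assoc k k k H H H) (c ⊗ₜ b)) =
      (LinearMap.mul' k H (LinearMap.rTensor H (antipode (R := k)) c)) ⊗ₜ b := by
  induction c using TensorProduct.induction_on with
  | zero => simp
  | tmul x y =>
      rw [Algebra.TensorProduct.assoc_tmul, phiS_tmul,
        Algebra.TensorProduct.tmul_mul_tmul, one_mul, LinearMap.rTensor_tmul,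
        LinearMap.mul'_apply]
  | add x y hx hy =>
      rw [TensorProduct.add_tmul, map_add, map_add, hx, hy, map_add, map_add,
        ← TensorProduct.add_tmul]

lemma Did_tmul (a b : H) :
    Δid k H (a ⊗ₜ b) = (Algebra.TensorProduct.assoc k k k H H H) ((comul (R := k) a) ⊗ₜ b) := by
  simp [Bialgebra.comulAlgHom_apply]

lemma eid_tmul (a b : H) : εid k H (a ⊗ₜ b) = counit (R := k) a • b := by
  simp [Bialgebra.counitAlgHom_apply, TensorProduct.lid_tmul]

lemma phiS_Did (z : H ⊗[k] H) :
    phiS k H (Δid k H z) =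
      (Algebra.TensorProduct.includeRight : H →ₐ[k] H ⊗[k] H) (εid k H z) := by
  induction z using TensorProduct.induction_on with
  | zero => simp
  | tmul a b =>
      rw [Did_tmul, phiS_assoc, mul_antipode_rTensor_comul_apply, eid_tmul,
        Algebra.TensorProduct.includeRight_apply, TensorProduct.tmul_smul,
        Algebra.algebraMap_eq_smul_one, TensorProduct.smul_tmul']
  | add x y hx hy => simp only [map_add, hx, hy]

/-- counit on the first of three factors. -/
def Emap : H ⊗[k] (H ⊗[k] H) →ₐ[k] H ⊗[k] H :=
  (Algebra.TensorProduct.lid k (H ⊗[k] H)).toAlgHom.comp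
    (Algebra.TensorProduct.map (Bialgebra.counitAlgHom k H) (AlgHom.id k (H ⊗[k] H)))

lemma Emap_tmul (a : H) (w : H ⊗[k] H) :
    Emap k H (a ⊗ₜ w) = counit (R := k) a • w := by
  simp [Emap, Bialgebra.counitAlgHom_apply, TensorProduct.lid_tmul]

lemma Emap_assoc (c : H ⊗[k] H) (b : H) :
    Emap k H ((Algebra.TensorProduct.assoc k k k H H H) (c ⊗ₜ b)) =
      (TensorProduct.lid k H (LinearMap.rTensor H (counit (R := k)) c)) ⊗ₜ b := by
  induction c using TensorProduct.induction_on with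
  | zero => simp
  | tmul x y =>
      rw [Algebra.TensorProduct.assoc_tmul, Emap_tmul, LinearMap.rTensor_tmul,
        TensorProduct.lid_tmul, TensorProduct.smul_tmul']
  | add x y hx hy =>
      rw [TensorProduct.add_tmul, map_add, map_add, hx, hy, map_add, map_add,
        ← TensorProduct.add_tmul]

lemma Emap_Did (z : H ⊗[k] H) : Emap k H (Δid k H z) = z := by
  induction z using TensorProduct.induction_on with
  | zero => simp
  | tmul a b =>
      rw [Did_tmul, Emap_assoc, Coalgebra.rTensor_counit_comul, TensorProduct.lid_tmul,
        one_smul]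
  | add x y hx hy => rw [map_add, map_add, hx, hy]

lemma Emap_iota13 (z : H ⊗[k] H) :
    Emap k H (ι₁₃ k H z) =
      (Algebra.TensorProduct.includeRight : H →ₐ[k] H ⊗[k] H) (εid k H z) := by
  induction z using TensorProduct.induction_on with
  | zero => simp
  | tmul a b =>
      rw [show ι₁₃ k H (a ⊗ₜ b) = a ⊗ₜ ((1 : H) ⊗ₜ b) from rfl, Emap_tmul, eid_tmul,
        Algebra.TensorProduct.includeRight_apply, TensorProduct.tmul_smul]
  | add x y hx hy => simp only [map_add, hx, hy]

lemma Emap_iota23 (r : H ⊗[k] H) : Emap k H (ι₂₃ k H r) = r := by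
  rw [show ι₂₃ k H r = (1 : H) ⊗ₜ r from rfl, Emap_tmul]
  simp

lemma eid_includeRight (x : H) :
    εid k H ((Algebra.TensorProduct.includeRight : H →ₐ[k] H ⊗[k] H) x) = x := by
  rw [Algebra.TensorProduct.includeRight_apply, eid_tmul]
  simp

lemma evR_tmul (l : H →ₗ[k] k) (x y : H) : evR k H l (x ⊗ₜ y) = l y • x := by
  simp [evR]

lemma evL_tmul (l : H →ₗ[k] k) (x y : H) : evL k H l (x ⊗ₜ y) = l x • y := by
  simp [evL]

open HopfAlgebra in
lemma antipode_evR_eq (l : H →ₗ[k] k) (z : H ⊗[k] H) :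
    antipode (R := k) (evR k H l z) = evR k H l (Sid k H z) := by
  induction z using TensorProduct.induction_on with
  | zero => simp
  | tmul x y => rw [evR_tmul, map_smul, Sid, LinearMap.rTensor_tmul, evR_tmul]
  | add x y hx hy => simp only [map_add, hx, hy]

lemma evR_comm (l : H →ₗ[k] k) (z : H ⊗[k] H) :
    evR k H l ((TensorProduct.comm k H H) z) = evL k H l z := by
  induction z using TensorProduct.induction_on with
  | zero => simp
  | tmul x y => rw [TensorProduct.comm_tmul, evR_tmul, evL_tmul]
  | add x y hx hy => simp only [map_add, hx, hy]

lemma evL_comm (l : H →ₗ[k] k) (z : H ⊗[k] H) :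
    evL k H l ((TensorProduct.comm k H H) z) = evR k H l z := by
  induction z using TensorProduct.induction_on with
  | zero => simp
  | tmul x y => rw [TensorProduct.comm_tmul, evR_tmul, evL_tmul]
  | add x y hx hy => simp only [map_add, hx, hy]

open HopfAlgebra in
lemma evL_antipode_comp (l : H →ₗ[k] k) (z : H ⊗[k] H) :
    evL k H (l ∘ₗ antipode (R := k)) z = evL k H l (Sid k H z) := by
  induction z using TensorProduct.induction_on with
  | zero => simp
  | tmul x y =>
      rw [evL_tmul, Sid, LinearMap.rTensor_tmul, evL_tmul, LinearMap.comp_apply]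
  | add x y hx hy => simp only [map_add, hx, hy]

lemma evR_add_l (l l' : H →ₗ[k] k) (z : H ⊗[k] H) :
    evR k H (l + l') z = evR k H l z + evR k H l' z := by
  induction z using TensorProduct.induction_on with
  | zero => simp
  | tmul x y => simp [evR_tmul, add_smul]
  | add x y hx hy => simp only [map_add, hx, hy]; abel

lemma evR_smul_l (c : k) (l : H →ₗ[k] k) (z : H ⊗[k] H) :
    evR k H (c • l) z = c • evR k H l z := by
  induction z using TensorProduct.induction_on with
  | zero => simp
  | tmul x y => simp [evR_tmul, smul_smul]
  | add x y hx hy => simp only [map_add, hx, hy, smul_add]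

lemma evL_add_l (l l' : H →ₗ[k] k) (z : H ⊗[k] H) :
    evL k H (l + l') z = evL k H l z + evL k H l' z := by
  induction z using TensorProduct.induction_on with
  | zero => simp
  | tmul x y => simp [evL_tmul, add_smul]
  | add x y hx hy => simp only [map_add, hx, hy]; abel

lemma evL_smul_l (c : k) (l : H →ₗ[k] k) (z : H ⊗[k] H) :
    evL k H (c • l) z = c • evL k H l z := by
  induction z using TensorProduct.induction_on with
  | zero => simp
  | tmul x y => simp [evL_tmul, smul_smul]
  | add x y hx hy => simp only [map_add, hx, hy, smul_add]

/-- `l ↦ (id ⊗ l)(R)` as a linear map on the dual. -/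
def LLmap (R : H ⊗[k] H) : (H →ₗ[k] k) →ₗ[k] H where
  toFun l := evR k H l R
  map_add' l l' := evR_add_l k H l l' R
  map_smul' c l := evR_smul_l k H c l R

/-- `l ↦ (l ⊗ id)(R)` as a linear map on the dual. -/
def RRmap (R : H ⊗[k] H) : (H →ₗ[k] k) →ₗ[k] H where
  toFun l := evL k H l R
  map_add' l l' := evL_add_l k H l l' R
  map_smul' c l := evL_smul_l k H c l R

end Aux

/-- For a unitary universal R-matrix, `S((id ⊗ l)(R)) = (l ⊗ id)(R)` for every `l ∈ H*`;
consequently `H_l = H_r`. -/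
theorem antipode_evR_of_unitary {k H : Type*} [Field k] [Ring H] [HopfAlgebra k H]
    (R : H ⊗[k] H) (hR : IsUnivRMatrix k H R) (hU : R * τ k H R = 1) :
    (∀ l : H →ₗ[k] k, HopfAlgebra.antipode (R := k) (evR k H l R) = evL k H l R) ∧
    Hl k H R = Hr k H R := by
  classical
  obtain ⟨hunit, -, -, hax⟩ := hR
  -- Step 1 : εid R = 1
  have hE := congrArg (Emap k H) hax
  rw [map_mul, Emap_Did, Emap_iota13, Emap_iota23] at hE
  set u := hunit.unit with hu
  have hRu : R = ↑u := hunit.unit_spec.symm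
  have hinc : (Algebra.TensorProduct.includeRight : H →ₐ[k] H ⊗[k] H) (εid k H R) = 1 := by
    have h2 := congrArg (fun z => z * (↑u⁻¹ : H ⊗[k] H)) hE
    simpa [mul_assoc, hRu, Units.mul_inv] using h2.symm
  have heps : εid k H R = 1 := by
    have h3 := congrArg (εid k H) hinc
    rwa [eid_includeRight, map_one] at h3
  -- Step 2 : Sid R * R = 1
  have hS := congrArg (phiS k H) hax
  rw [phiS_Did, phiS_mul_right, phiS_iota13, heps, map_one] at hS
  -- Step 3 : Sid R = τ R (both equal R⁻¹)
  have hτ : τ k H R = (↑u⁻¹ : H ⊗[k] H) := by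
    have h1 : (↑u : H ⊗[k] H) * τ k H R = 1 := by rw [← hRu]; exact hU
    calc τ k H R = (↑u⁻¹ * ↑u) * τ k H R := by rw [Units.inv_mul, one_mul]
    _ = ↑u⁻¹ := by rw [mul_assoc, h1, mul_one]
  have hSid : Sid k H R = τ k H R := by
    rw [hτ]
    calc Sid k H R = Sid k H R * (↑u * ↑u⁻¹) := by rw [Units.mul_inv, mul_one]
    _ = (Sid k H R * R) * ↑u⁻¹ := by rw [← mul_assoc, hRu]
    _ = ↑u⁻¹ := by rw [← hS, one_mul]
  have hcomm : Sid k H R = (TensorProduct.comm k H H) R := by rw [hSid]; rfl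
  -- part 1
  have main : ∀ l : H →ₗ[k] k,
      HopfAlgebra.antipode (R := k) (evR k H l R) = evL k H l R := by
    intro l
    rw [antipode_evR_eq, hcomm, evR_comm]
  refine ⟨main, ?_⟩
  -- part 2
  have hLL : Hl k H R = ↑(LinearMap.range (LLmap k H R)) := rfl
  have hRR : Hr k H R = ↑(LinearMap.range (RRmap k H R)) := rfl
  have hcompose : RRmap k H R = (HopfAlgebra.antipode (R := k)) ∘ₗ LLmap k H R := by
    ext l; exact (main l).symm
  have hle : LinearMap.range (LLmap k H R) ≤ LinearMap.range (RRmap k H R) := by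
    rintro x ⟨l, rfl⟩
    refine ⟨l ∘ₗ HopfAlgebra.antipode (R := k), ?_⟩
    show evL k H (l ∘ₗ HopfAlgebra.antipode (R := k)) R = evR k H l R
    rw [evL_antipode_comp, hcomm, evL_comm]
  obtain ⟨s, hs⟩ := TensorProduct.exists_finset R
  have hspan : LinearMap.range (LLmap k H R) ≤
      Submodule.span k ↑(s.image Prod.fst) := by
    rintro x ⟨l, rfl⟩
    show evR k H l R ∈ _
    rw [hs, map_sum]
    refine Submodule.sum_mem _ fun p hp => ?_
    rw [evR_tmul]
    exact Submodule.smul_mem _ _ (Submodule.subset_span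
      (Finset.mem_coe.mpr (Finset.mem_image_of_mem Prod.fst hp)))
  haveI : FiniteDimensional k ↥(LinearMap.range (LLmap k H R)) :=
    Submodule.finiteDimensional_of_le hspan
  have hmap : LinearMap.range (RRmap k H R) =
      Submodule.map (HopfAlgebra.antipode (R := k)) (LinearMap.range (LLmap k H R)) := by
    rw [hcompose, LinearMap.range_comp]
  haveI : FiniteDimensional k ↥(LinearMap.range (RRmap k H R)) := by
    rw [hmap]; infer_instance
  have hfr : Module.finrank k ↥(LinearMap.range (RRmap k H R)) ≤
      Module.finrank k ↥(LinearMap.range (LLmap k H R)) := by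
    rw [hmap]; exact Submodule.finrank_map_le _ _
  have heq := Submodule.eq_of_le_of_finrank_le hle hfr
  rw [hLL, hRR, heq]

end
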